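/- The total category Sig_a of signatures with amalgamation has all pullbacks and all small coproducts, and each fiber Sig_a(O) (signatures and morphisms over a fixed set O with identity base map) has all small filtered colimits. -/

import Mathlib

open CategoryTheory

universe u

/-- A signature with amalgamation over the set of types `O`: every function symbol `a`
has an arity `ar a`, an output type `out a = ∂_a 0` and input types `inp a i = ∂_a (i+1)`. -/
structure Sig (O : Type u) : Type (u + 1) where
  sym : Type u
  ar : sym → ℕ
  out : sym → O
  inp : (a : sym) → Fin (ar a) → O

/-- A morphism of signatures over a base map `u : O → Q`: a map of function symbols
together with amalgamation permutations, compatible with the typings. -/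
structure SigHomOver {O Q : Type u} (u : O → Q) (A : Sig O) (B : Sig Q) : Type u where
  f : A.sym → B.sym
  perm : (a : A.sym) → Equiv.Perm (Fin (A.ar a))
  ar_eq : ∀ a, B.ar (f a) = A.ar a
  out_eq : ∀ a, B.out (f a) = u (A.out a)
  inp_eq : ∀ (a : A.sym) (i : Fin (A.ar a)),
    B.inp (f a) (Fin.cast (ar_eq a).symm (perm a i)) = u (A.inp a i)

namespace SigHomOver

theorem ext' {O Q : Type u} {u : O → Q} {A : Sig O} {B : Sig Q}
    {F G : SigHomOver u A B} (h1 : F.f = G.f) (h2 : F.perm = G.perm) : F = G := by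
  cases F; cases G; cases h1; cases h2; rfl

/-- The identity morphism. -/
def id' {O : Type u} (A : Sig O) : SigHomOver (fun o => o) A A where
  f := fun a => a
  perm := fun a => Equiv.refl _
  ar_eq := fun _ => rfl
  out_eq := fun _ => rfl
  inp_eq := fun _ _ => rfl

/-- Composition of morphisms of signatures. -/
def comp {O Q R : Type u} {u : O → Q} {v : Q → R} {A : Sig O} {B : Sig Q} {C : Sig R}
    (F : SigHomOver u A B) (G : SigHomOver v B C) : SigHomOver (fun o => v (u o)) A C where
  f := fun a => G.f (F.f a)
  perm := fun a =>
    (F.perm a).trans ((finCongr (F.ar_eq a).symm).trans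
      ((G.perm (F.f a)).trans (finCongr (F.ar_eq a))))
  ar_eq := fun a => (G.ar_eq (F.f a)).trans (F.ar_eq a)
  out_eq := fun a => by rw [G.out_eq, F.out_eq]
  inp_eq := fun a i => by
    have h1 := G.inp_eq (F.f a) (Fin.cast (F.ar_eq a).symm (F.perm a i))
    have h2 := F.inp_eq a i
    rw [← h2, ← h1]
    exact congrArg (C.inp (G.f (F.f a))) (by ext; simp [finCongr])

/-- A morphism of signatures is strict if all its amalgamation permutations are
identities. -/
def Strict {O Q : Type u} {u : O → Q} {A : Sig O} {B : Sig Q} (F : SigHomOver u A B) : Prop :=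
  ∀ a, F.perm a = Equiv.refl _

end SigHomOver

/-- The fiber category of signatures with amalgamation over the fixed set `O`. -/
instance sigCategory (O : Type u) : Category.{u} (Sig O) where
  Hom A B := SigHomOver (fun o => o) A B
  id A := SigHomOver.id' A
  comp F G := F.comp G
  id_comp F := by
    apply SigHomOver.ext'
    · rfl
    · funext a; ext i
      simp [SigHomOver.comp, SigHomOver.id'] <;> rfl
  comp_id F := by
    apply SigHomOver.ext'
    · rfl
    · funext a; ext i
      simp [SigHomOver.comp, SigHomOver.id'] <;> rfl
  assoc F G H := by
    apply SigHomOver.ext'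
    · rfl
    · funext a; ext i
      simp [SigHomOver.comp] <;> rfl

/-- The total category of signatures with amalgamation over varying sets of types. -/
structure SigTot : Type (u + 1) where
  base : Type u
  sig : Sig base

instance sigTotCategory : Category.{u} (SigTot.{u}) where
  Hom X Y := (u : X.base → Y.base) × SigHomOver u X.sig Y.sig
  id X := ⟨fun o => o, SigHomOver.id' X.sig⟩
  comp F G := ⟨fun o => G.1 (F.1 o), F.2.comp G.2⟩
  id_comp F := by
    apply Sigma.ext
    · rfl
    · apply heq_of_eq
      apply SigHomOver.ext'
      · rfl
      · funext a; ext i; simp [SigHomOver.comp, SigHomOver.id'] <;> rfl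
  comp_id F := by
    apply Sigma.ext
    · rfl
    · apply heq_of_eq
      apply SigHomOver.ext'
      · rfl
      · funext a; ext i; simp [SigHomOver.comp, SigHomOver.id'] <;> rfl
  assoc F G H := by
    apply Sigma.ext
    · rfl
    · apply heq_of_eq
      apply SigHomOver.ext'
      · rfl
      · funext a; ext i; simp [SigHomOver.comp] <;> rfl

/-!
# Statement 10

The total category of signatures with amalgamation has all pullbacks and all small
coproducts, and each fiber `Sig O` has all small filtered colimits.
-/


/-! ### Helper lemmas -/

namespace SigHomOver

@[simp] lemma comp_f {O Q R : Type u} {u : O → Q} {v : Q → R} {A : Sig O} {B : Sig Q} {C : Sig R}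
    (F : SigHomOver u A B) (G : SigHomOver v B C) (a : A.sym) : (F.comp G).f a = G.f (F.f a) := rfl

lemma comp_perm {O Q R : Type u} {u : O → Q} {v : Q → R} {A : Sig O} {B : Sig Q} {C : Sig R}
    (F : SigHomOver u A B) (G : SigHomOver v B C) (a : A.sym) :
    (F.comp G).perm a = (F.perm a).trans ((finCongr (F.ar_eq a).symm).trans
      ((G.perm (F.f a)).trans (finCongr (F.ar_eq a)))) := rfl

/-- The equivalence `Fin (A.ar a) ≃ Fin (B.ar (F.f a))` induced by a signature morphism. -/
def toEquiv {O Q : Type u} {u : O → Q} {A : Sig O} {B : Sig Q} (F : SigHomOver u A B)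
    (a : A.sym) : Fin (A.ar a) ≃ Fin (B.ar (F.f a)) :=
  (F.perm a).trans (finCongr (F.ar_eq a).symm)

lemma toEquiv_inp {O Q : Type u} {u : O → Q} {A : Sig O} {B : Sig Q} (F : SigHomOver u A B)
    (a : A.sym) (i : Fin (A.ar a)) : B.inp (F.f a) (F.toEquiv a i) = u (A.inp a i) :=
  F.inp_eq a i

lemma toEquiv_comp {O Q R : Type u} {u : O → Q} {v : Q → R} {A : Sig O} {B : Sig Q} {C : Sig R}
    (F : SigHomOver u A B) (G : SigHomOver v B C) (a : A.sym) :
    (F.comp G).toEquiv a = (F.toEquiv a).trans (G.toEquiv (F.f a)) := by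
  ext i
  rfl

end SigHomOver

lemma Sig.inp_congr {O : Type u} (A : Sig O) {a b : A.sym} (h : a = b) (i : Fin (A.ar a)) :
    A.inp a i = A.inp b (Fin.cast (congrArg A.ar h) i) := by subst h; rfl

namespace SigTot

lemma hom_ext {X Y : SigTot.{u}}
    {F G : (u : X.base → Y.base) × SigHomOver u X.sig Y.sig}
    (h1 : F.1 = G.1) (h2 : F.2.f = G.2.f) (h3 : F.2.perm = G.2.perm) : F = G := by
  obtain ⟨u, F⟩ := F; obtain ⟨v, G⟩ := G
  cases h1
  exact congrArg _ (SigHomOver.ext' h2 h3)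

lemma hom_congr {X Y : SigTot.{u}}
    {F G : (u : X.base → Y.base) × SigHomOver u X.sig Y.sig} (h : F = G) :
    F.1 = G.1 ∧ F.2.f = G.2.f ∧ F.2.perm = G.2.perm := by subst h; exact ⟨rfl, rfl, rfl⟩

@[simp] lemma comp_fst {X Y Z : SigTot.{u}} (F : X ⟶ Y) (G : Y ⟶ Z) :
    (F ≫ G).1 = fun o => G.1 (F.1 o) := rfl

@[simp] lemma comp_snd {X Y Z : SigTot.{u}} (F : X ⟶ Y) (G : Y ⟶ Z) :
    (F ≫ G).2 = F.2.comp G.2 := rfl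

end SigTot

/-! ### Coproducts in the total category -/

open CategoryTheory.Limits

namespace SigTot

variable {J : Type u} (X : J → SigTot.{u})

/-- The coproduct of a family of signatures. -/
def sigma : SigTot.{u} where
  base := Σ j, (X j).base
  sig := { sym := Σ j, (X j).sig.sym
           ar := fun a => (X a.1).sig.ar a.2
           out := fun a => ⟨a.1, (X a.1).sig.out a.2⟩
           inp := fun a i => ⟨a.1, (X a.1).sig.inp a.2 i⟩ }

/-- The coprojections. -/
def sigmaInj (j : J) : X j ⟶ sigma X :=
  ⟨fun o => ⟨j, o⟩,
   { f := fun a => ⟨j, a⟩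
     perm := fun _ => Equiv.refl _
     ar_eq := fun _ => rfl
     out_eq := fun _ => rfl
     inp_eq := fun _ _ => rfl }⟩

/-- The coproduct cofan. -/
def sigmaCofan : Cofan X := Cofan.mk (sigma X) (sigmaInj X)

/-- Descent out of the coproduct. -/
def sigmaDesc (t : Cofan X) : sigma X ⟶ t.pt :=
  ⟨fun o => (t.inj o.1).1 o.2,
   { f := fun a => (t.inj a.1).2.f a.2
     perm := fun a => (t.inj a.1).2.perm a.2
     ar_eq := fun a => (t.inj a.1).2.ar_eq a.2
     out_eq := fun a => (t.inj a.1).2.out_eq a.2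
     inp_eq := fun a i => (t.inj a.1).2.inp_eq a.2 i }⟩

/-- The coproduct cofan is a colimit. -/
def sigmaIsColimit : IsColimit (sigmaCofan X) :=
  mkCofanColimit _ (fun t => sigmaDesc X t)
    (fun t j => by
      apply hom_ext
      · rfl
      · rfl
      · funext a
        simp [sigmaCofan, sigmaInj, sigmaDesc, SigHomOver.comp_perm] <;> rfl)
    (fun t m hm => by
      apply hom_ext
      · funext o
        exact congrFun (hom_congr (hm o.1)).1 o.2
      · funext a
        exact congrFun (hom_congr (hm a.1)).2.1 a.2
      · funext a
        have h := congrFun (hom_congr (hm a.1)).2.2 a.2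
        simp only [comp_snd, SigHomOver.comp_perm, sigmaCofan, sigmaInj, Cofan.inj] at h
        exact h)

instance (f : J → SigTot.{u}) : HasColimit (Discrete.functor f) :=
  HasColimit.mk ⟨sigmaCofan f, sigmaIsColimit f⟩

instance : HasCoproducts.{u} (SigTot.{u}) := fun J =>
  ⟨fun K => hasColimit_of_iso (F := Discrete.functor (K.obj ∘ Discrete.mk))
    (G := K) (Discrete.natIsoFunctor)⟩

end SigTot

/-! ### Pullbacks in the total category -/

namespace SigTot

variable {X Y Z : SigTot.{u}} (F : X ⟶ Z) (G : Y ⟶ Z)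

/-- The matching equivalence between arities of matched symbols. -/
def pbEquiv (a : {p : X.sig.sym × Y.sig.sym // F.2.f p.1 = G.2.f p.2}) :
    Fin (X.sig.ar a.1.1) ≃ Fin (Y.sig.ar a.1.2) :=
  (F.2.toEquiv a.1.1).trans ((finCongr (congrArg Z.sig.ar a.2)).trans (G.2.toEquiv a.1.2).symm)

lemma pb_ar (a : {p : X.sig.sym × Y.sig.sym // F.2.f p.1 = G.2.f p.2}) :
    Y.sig.ar a.1.2 = X.sig.ar a.1.1 := by
  rw [← F.2.ar_eq a.1.1, ← G.2.ar_eq a.1.2, a.2]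

lemma pb_inp (a : {p : X.sig.sym × Y.sig.sym // F.2.f p.1 = G.2.f p.2})
    (i : Fin (X.sig.ar a.1.1)) :
    F.1 (X.sig.inp a.1.1 i) = G.1 (Y.sig.inp a.1.2 (pbEquiv F G a i)) := by
  rw [← F.2.toEquiv_inp a.1.1 i, ← G.2.toEquiv_inp a.1.2 (pbEquiv F G a i)]
  rw [Z.sig.inp_congr (a.2) (F.2.toEquiv a.1.1 i)]
  congr 1
  simp [pbEquiv, finCongr_apply]

/-- The pullback object. -/
def pb : SigTot.{u} where
  base := {p : X.base × Y.base // F.1 p.1 = G.1 p.2}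
  sig :=
    { sym := {p : X.sig.sym × Y.sig.sym // F.2.f p.1 = G.2.f p.2}
      ar := fun a => X.sig.ar a.1.1
      out := fun a => ⟨(X.sig.out a.1.1, Y.sig.out a.1.2), by
        rw [← F.2.out_eq, ← G.2.out_eq, a.2]⟩
      inp := fun a i => ⟨(X.sig.inp a.1.1 i, Y.sig.inp a.1.2 (pbEquiv F G a i)),
        pb_inp F G a i⟩ }

/-- First projection of the pullback. -/
def pbFst : pb F G ⟶ X :=
  ⟨fun o => o.1.1,
   { f := fun a => a.1.1
     perm := fun _ => Equiv.refl _
     ar_eq := fun _ => rfl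
     out_eq := fun _ => rfl
     inp_eq := fun _ _ => rfl }⟩

/-- Second projection of the pullback. -/
def pbSnd : pb F G ⟶ Y :=
  ⟨fun o => o.1.2,
   { f := fun a => a.1.2
     perm := fun a => (pbEquiv F G a).trans (finCongr (pb_ar F G a))
     ar_eq := fun a => pb_ar F G a
     out_eq := fun _ => rfl
     inp_eq := fun a i => by
       show Y.sig.inp a.1.2 _ = Y.sig.inp a.1.2 _
       congr 1 }⟩

lemma pb_condition : pbFst F G ≫ F = pbSnd F G ≫ G := by
  apply hom_ext
  · funext o; exact o.2
  · funext a; exact a.2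
  · funext a
    simp only [comp_snd, SigHomOver.comp_perm]
    ext i
    simp [pbFst, pbSnd, pbEquiv, SigHomOver.toEquiv, finCongr_apply]
    exact (congrArg Fin.val ((G.2.perm a.1.2).apply_symm_apply
      (Fin.cast (pb_ar F G a).symm (F.2.perm a.1.1 i)))).symm

end SigTot

namespace SigTot

open CategoryTheory.Limits

variable {X Y Z : SigTot.{u}} (F : X ⟶ Z) (G : Y ⟶ Z)

lemma pbLift_hidx {W : SigTot.{u}} (r : W ⟶ X) (s : W ⟶ Y) (hc : r ≫ F = s ≫ G)
    (a : W.sig.sym) (i : Fin (W.sig.ar a)) :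
    pbEquiv F G ⟨(r.2.f a, s.2.f a), congrFun (hom_congr hc).2.1 a⟩
      (Fin.cast (r.2.ar_eq a).symm (r.2.perm a i)) = s.2.toEquiv a i := by
  have hp := congrFun (hom_congr hc).2.2 a
  simp only [comp_snd, SigHomOver.comp_perm] at hp
  have key := congrArg Fin.val
    (congrFun (congrArg (fun (e : Equiv.Perm _) => (e : Fin _ → Fin _)) hp) i)
  simp only [Equiv.trans_apply, finCongr_apply, Fin.coe_cast] at key
  simp only [pbEquiv, Equiv.trans_apply]
  rw [Equiv.symm_apply_eq]
  apply Fin.ext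
  simpa [SigHomOver.toEquiv, finCongr_apply] using key

/-- Lift into the pullback. -/
def pbLift {W : SigTot.{u}} (r : W ⟶ X) (s : W ⟶ Y) (hc : r ≫ F = s ≫ G) : W ⟶ pb F G :=
  ⟨fun o => ⟨(r.1 o, s.1 o), congrFun (hom_congr hc).1 o⟩,
   { f := fun a => ⟨(r.2.f a, s.2.f a), congrFun (hom_congr hc).2.1 a⟩
     perm := fun a => r.2.perm a
     ar_eq := fun a => r.2.ar_eq a
     out_eq := fun a => by
       apply Subtype.ext
       exact Prod.ext (r.2.out_eq a) (s.2.out_eq a)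
     inp_eq := fun a i => by
       apply Subtype.ext
       apply Prod.ext
       · exact r.2.inp_eq a i
       · show Y.sig.inp (s.2.f a) _ = s.1 (W.sig.inp a i)
         refine (congrArg (Y.sig.inp (s.2.f a)) (pbLift_hidx F G r s hc a i)).trans ?_
         exact s.2.toEquiv_inp a i }⟩

/-- The pullback cone. -/
def pbCone : PullbackCone F G := PullbackCone.mk (pbFst F G) (pbSnd F G) (pb_condition F G)

/-- The pullback cone is a limit. -/
def pbIsLimit : IsLimit (pbCone F G) :=
  PullbackCone.IsLimit.mk (pb_condition F G)
    (fun c => pbLift F G c.fst c.snd c.condition)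
    (fun c => by
      apply hom_ext
      · rfl
      · rfl
      · funext a
        simp only [comp_snd, SigHomOver.comp_perm]
        ext i
        rfl)
    (fun c => by
      apply hom_ext
      · rfl
      · rfl
      · funext a
        simp only [comp_snd, SigHomOver.comp_perm]
        ext i
        have h := congrArg Fin.val (pbLift_hidx F G c.fst c.snd c.condition a i)
        simp only [SigHomOver.toEquiv, Equiv.trans_apply, finCongr_apply, Fin.coe_cast] at h
        exact h)
    (fun c m hfst hsnd => by
      apply hom_ext
      · funext o
        apply Subtype.ext
        exact Prod.ext (congrFun (hom_congr hfst).1 o) (congrFun (hom_congr hsnd).1 o)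
      · funext a
        apply Subtype.ext
        exact Prod.ext (congrFun (hom_congr hfst).2.1 a) (congrFun (hom_congr hsnd).2.1 a)
      · funext a
        have h := congrFun (hom_congr hfst).2.2 a
        simp only [comp_snd, SigHomOver.comp_perm, pbFst] at h
        exact h)

instance : HasPullbacks (SigTot.{u}) :=
  have : ∀ {A B C : SigTot.{u}} {f : A ⟶ C} {g : B ⟶ C}, HasLimit (cospan f g) :=
    fun {_ _ _ f g} => HasLimit.mk ⟨pbCone f g, pbIsLimit f g⟩
  hasPullbacks_of_hasLimit_cospan _

end SigTot

/-! ### Filtered colimits in the fibers -/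

namespace SigFil

open CategoryTheory.Limits IsFiltered

variable {O : Type u} {J : Type u} [Category.{u} J] [IsFiltered J] (F : J ⥤ Sig.{u} O)

/-- Elements of the diagram of symbols. -/
abbrev El := Σ j : J, (F.obj j).sym

/-- Two elements are related if they are identified somewhere in the diagram. -/
def Rel (e e' : El F) : Prop :=
  ∃ (l : J) (φ : e.1 ⟶ l) (ψ : e'.1 ⟶ l), (F.map φ).f e.2 = (F.map ψ).f e'.2

lemma map_f_comp {j k l : J} (φ : j ⟶ k) (ψ : k ⟶ l) (x : (F.obj j).sym) :
    (F.map (φ ≫ ψ)).f x = (F.map ψ).f ((F.map φ).f x) := by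
  rw [F.map_comp]; rfl

lemma rel_refl (e : El F) : Rel F e e := ⟨e.1, 𝟙 e.1, 𝟙 e.1, rfl⟩

lemma rel_symm {e e' : El F} (h : Rel F e e') : Rel F e' e := by
  obtain ⟨l, φ, ψ, h⟩ := h; exact ⟨l, ψ, φ, h.symm⟩

lemma rel_trans {e e' e'' : El F} (h : Rel F e e') (h' : Rel F e' e'') : Rel F e e'' := by
  obtain ⟨l, φ, ψ, h⟩ := h
  obtain ⟨l', φ', ψ', h'⟩ := h'
  refine ⟨coeq (ψ ≫ leftToMax l l') (φ' ≫ rightToMax l l'),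
    φ ≫ leftToMax l l' ≫ coeqHom (ψ ≫ leftToMax l l') (φ' ≫ rightToMax l l'),
    ψ' ≫ rightToMax l l' ≫ coeqHom (ψ ≫ leftToMax l l') (φ' ≫ rightToMax l l'), ?_⟩
  have hc := coeq_condition (ψ ≫ leftToMax l l') (φ' ≫ rightToMax l l')
  have hc2 := congrArg (fun (g : _ ⟶ _) => (F.map g).f e'.2) hc
  simp only [map_f_comp] at hc2 ⊢
  rw [h, hc2, ← h']

lemma rel_equivalence : _root_.Equivalence (Rel F) :=
  ⟨rel_refl F, rel_symm F, rel_trans F⟩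

/-- `σ` links `e` to `e'` if it is the comparison bijection obtained from some
identification of the two elements in the diagram. -/
def Linked (e e' : El F) (σ : Fin ((F.obj e.1).ar e.2) ≃ Fin ((F.obj e'.1).ar e'.2)) : Prop :=
  ∃ (l : J) (φ : e.1 ⟶ l) (ψ : e'.1 ⟶ l) (_ : (F.map φ).f e.2 = (F.map ψ).f e'.2),
    ∀ i, (((F.map ψ).toEquiv e'.2) (σ i)).val = (((F.map φ).toEquiv e.2) i).val

@[simp] lemma toEquiv_val {O' Q : Type u} {v : O' → Q} {A : Sig O'} {B : Sig Q}
    (g : SigHomOver v A B) (a : A.sym) (i : Fin (A.ar a)) :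
    ((g.toEquiv a) i).val = ((g.perm a) i).val := rfl

lemma perm_congr {O' Q : Type u} {v : O' → Q} {A : Sig O'} {B : Sig Q} (g : SigHomOver v A B)
    {a a' : A.sym} (h : a = a') {i : Fin (A.ar a)} {i' : Fin (A.ar a')} (hi : i.val = i'.val) :
    ((g.perm a) i).val = ((g.perm a') i').val := by
  subst h; cases Fin.ext hi; rfl

lemma toEquiv_point_val {O' Q : Type u} {v : O' → Q} {A : Sig O'} {B : Sig Q}
    (g : SigHomOver v A B) {a a' : A.sym} (h : a = a')
    {i : Fin (A.ar a)} {i' : Fin (A.ar a')} (hi : i.val = i'.val) :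
    ((g.toEquiv a) i).val = ((g.toEquiv a') i').val := by
  subst h; cases Fin.ext hi; rfl

lemma hom_toEquiv_val_congr {O' Q : Type u} {v : O' → Q} {A : Sig O'} {B : Sig Q}
    {g g' : SigHomOver v A B} (h : g = g') (a : A.sym) (i : Fin (A.ar a)) :
    ((g.toEquiv a) i).val = ((g'.toEquiv a) i).val := by subst h; rfl

lemma map_comp_toEquiv_val {j k l : J} (φ : j ⟶ k) (γ : k ⟶ l) (x : (F.obj j).sym)
    (i : Fin ((F.obj j).ar x)) :
    (((F.map (φ ≫ γ)).toEquiv x) i).val =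
      (((F.map γ).toEquiv ((F.map φ).f x)) (((F.map φ).toEquiv x) i)).val := by
  rw [hom_toEquiv_val_congr (F.map_comp φ γ) x i,
    show SigHomOver.toEquiv (F.map φ ≫ F.map γ) x = ((F.map φ).comp (F.map γ)).toEquiv x from rfl,
    SigHomOver.toEquiv_comp]
  rfl

lemma map_id_f {j : J} (y : (F.obj j).sym) : (F.map (𝟙 j)).f y = y := by
  rw [F.map_id]; rfl

lemma map_id_toEquiv_val {j : J} (y : (F.obj j).sym) (i : Fin ((F.obj j).ar y)) :
    (((F.map (𝟙 j)).toEquiv y) i).val = i.val := by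
  rw [show (((F.map (𝟙 j)).toEquiv y) i).val = (((𝟙 (F.obj j) : F.obj j ⟶ F.obj j).toEquiv y) i).val from
    by rw [F.map_id]]
  rfl

/-- Pushing a linking certificate forward along a morphism of the diagram. -/
lemma linked_push {e e' : El F}
    {σ : Fin ((F.obj e.1).ar e.2) ≃ Fin ((F.obj e'.1).ar e'.2)} {l : J} (φ : e.1 ⟶ l) (ψ : e'.1 ⟶ l)
    (h : (F.map φ).f e.2 = (F.map ψ).f e'.2)
    (hrel : ∀ i, (((F.map ψ).toEquiv e'.2) (σ i)).val = (((F.map φ).toEquiv e.2) i).val)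
    {l' : J} (γ : l ⟶ l') :
    ∃ (h' : (F.map (φ ≫ γ)).f e.2 = (F.map (ψ ≫ γ)).f e'.2),
      ∀ i, (((F.map (ψ ≫ γ)).toEquiv e'.2) (σ i)).val =
        (((F.map (φ ≫ γ)).toEquiv e.2) i).val := by
  refine ⟨by rw [map_f_comp, map_f_comp, h], fun i => ?_⟩
  rw [map_comp_toEquiv_val, map_comp_toEquiv_val]
  exact toEquiv_point_val (F.map γ) h.symm (hrel i)

lemma linked_refl (e : El F) : Linked F e e (Equiv.refl _) :=
  ⟨e.1, 𝟙 e.1, 𝟙 e.1, rfl, fun _ => rfl⟩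

lemma linked_symm {e e' : El F} {σ} (h : Linked F e e' σ) : Linked F e' e σ.symm := by
  obtain ⟨l, φ, ψ, hf, hrel⟩ := h
  exact ⟨l, ψ, φ, hf.symm, fun i => by
    have := hrel (σ.symm i)
    rw [Equiv.apply_symm_apply] at this
    exact this.symm⟩

lemma exists_linked {e e' : El F} (h : Rel F e e') : ∃ σ, Linked F e e' σ := by
  obtain ⟨l, φ, ψ, h⟩ := h
  refine ⟨((F.map φ).toEquiv e.2).trans ((finCongr (congrArg (F.obj l).ar h)).trans
    ((F.map ψ).toEquiv e'.2).symm), l, φ, ψ, h, fun i => ?_⟩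
  simp [finCongr_apply]

lemma linked_trans {e e' e'' : El F} {σ τ} (h : Linked F e e' σ) (h' : Linked F e' e'' τ) :
    Linked F e e'' (σ.trans τ) := by
  obtain ⟨l, φ, ψ, hf, hrel⟩ := h
  obtain ⟨l', φ', ψ', hf', hrel'⟩ := h'
  -- push both certificates to a common stage, so that the middle legs agree
  obtain ⟨h1, hr1⟩ := linked_push F φ ψ hf hrel
    (leftToMax l l' ≫ coeqHom (ψ ≫ leftToMax l l') (φ' ≫ rightToMax l l'))
  obtain ⟨h2, hr2⟩ := linked_push F φ' ψ' hf' hrel'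
    (rightToMax l l' ≫ coeqHom (ψ ≫ leftToMax l l') (φ' ≫ rightToMax l l'))
  have hmid : ψ ≫ leftToMax l l' ≫ coeqHom (ψ ≫ leftToMax l l') (φ' ≫ rightToMax l l')
      = φ' ≫ rightToMax l l' ≫ coeqHom (ψ ≫ leftToMax l l') (φ' ≫ rightToMax l l') := by
    rw [← Category.assoc, ← Category.assoc]
    exact coeq_condition _ _
  refine ⟨_, φ ≫ leftToMax l l' ≫ coeqHom (ψ ≫ leftToMax l l') (φ' ≫ rightToMax l l'),
    ψ' ≫ rightToMax l l' ≫ coeqHom (ψ ≫ leftToMax l l') (φ' ≫ rightToMax l l'), ?_, ?_⟩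
  · rw [h1, ← h2]
    exact congrArg (fun (g : _ ⟶ _) => (F.map g).f e'.2) hmid
  · intro i
    rw [Equiv.trans_apply, hr2 (σ i), ← hr1 i]
    exact (hom_toEquiv_val_congr (congrArg F.map hmid) e'.2 (σ i)).symm

/-- Uniqueness of linking bijections. -/
lemma linked_unique {e e' : El F} {σ τ} (h : Linked F e e' σ) (h' : Linked F e e' τ) :
    σ = τ := by
  obtain ⟨l, φ, ψ, hf, hrel⟩ := h
  obtain ⟨l', φ', ψ', hf', hrel'⟩ := h'
  -- first equalize the two ψ-legs
  let s1 := coeqHom (ψ ≫ leftToMax l l') (ψ' ≫ rightToMax l l')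
  let γ₁ : l ⟶ coeq (ψ ≫ leftToMax l l') (ψ' ≫ rightToMax l l') := leftToMax l l' ≫ s1
  let γ₂ : l' ⟶ coeq (ψ ≫ leftToMax l l') (ψ' ≫ rightToMax l l') := rightToMax l l' ≫ s1
  have hmid : ψ ≫ γ₁ = ψ' ≫ γ₂ := by
    show ψ ≫ leftToMax l l' ≫ s1 = ψ' ≫ rightToMax l l' ≫ s1
    rw [← Category.assoc, ← Category.assoc]
    exact coeq_condition _ _
  obtain ⟨h1, hr1⟩ := linked_push F φ ψ hf hrel γ₁
  obtain ⟨h2, hr2⟩ := linked_push F φ' ψ' hf' hrel' γ₂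
  -- now equalize the two φ-legs
  let δ := coeqHom (φ ≫ γ₁) (φ' ≫ γ₂)
  obtain ⟨h1', hr1'⟩ := linked_push F (φ ≫ γ₁) (ψ ≫ γ₁) h1 hr1 δ
  obtain ⟨h2', hr2'⟩ := linked_push F (φ' ≫ γ₂) (ψ' ≫ γ₂) h2 hr2 δ
  have hφeq : (φ ≫ γ₁) ≫ δ = (φ' ≫ γ₂) ≫ δ := coeq_condition _ _
  have hψeq : (ψ ≫ γ₁) ≫ δ = (ψ' ≫ γ₂) ≫ δ := by rw [hmid]
  ext i
  have hT : ((F.map ((ψ ≫ γ₁) ≫ δ)).toEquiv e'.2) (σ i)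
      = ((F.map ((ψ ≫ γ₁) ≫ δ)).toEquiv e'.2) (τ i) := by
    apply Fin.ext
    rw [hr1' i, hom_toEquiv_val_congr (congrArg F.map hψeq) e'.2 (τ i), hr2' i]
    exact hom_toEquiv_val_congr (congrArg F.map hφeq) e.2 i
  exact congrArg Fin.val (((F.map ((ψ ≫ γ₁) ≫ δ)).toEquiv e'.2).injective hT)

lemma linked_ar {e e' : El F} {σ} (h : Linked F e e' σ) :
    (F.obj e'.1).ar e'.2 = (F.obj e.1).ar e.2 := by
  have : Nonempty (Fin ((F.obj e'.1).ar e'.2) ≃ Fin ((F.obj e.1).ar e.2)) := ⟨σ.symm⟩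
  exact Fin.equiv_iff_eq.mp ⟨σ⟩ |>.symm

lemma inp_congr' {O' : Type u} (A : Sig O') {a b : A.sym} (h : a = b) {i : Fin (A.ar a)}
    {j : Fin (A.ar b)} (hij : i.val = j.val) : A.inp a i = A.inp b j := by
  subst h; cases Fin.ext hij; rfl

lemma linked_out {e e' : El F} {σ} (h : Linked F e e' σ) :
    (F.obj e'.1).out e'.2 = (F.obj e.1).out e.2 := by
  obtain ⟨l, φ, ψ, hf, -⟩ := h
  have h1 := (F.map φ).out_eq e.2
  have h2 := (F.map ψ).out_eq e'.2
  rw [← hf] at h2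
  exact h2.symm.trans h1

lemma linked_inp {e e' : El F} {σ} (h : Linked F e e' σ) (i : Fin ((F.obj e.1).ar e.2)) :
    (F.obj e'.1).inp e'.2 (σ i) = (F.obj e.1).inp e.2 i := by
  obtain ⟨l, φ, ψ, hf, hrel⟩ := h
  have k1 := (F.map ψ).toEquiv_inp e'.2 (σ i)
  have k2 := (F.map φ).toEquiv_inp e.2 i
  rw [← k1, ← k2]
  exact inp_congr' (F.obj l) hf.symm (hrel i)

lemma linked_map {j k : J} (φ0 : j ⟶ k) (x : (F.obj j).sym) :
    Linked F ⟨j, x⟩ ⟨k, (F.map φ0).f x⟩ ((F.map φ0).toEquiv x) :=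
  ⟨k, φ0, 𝟙 k, (map_id_f F _).symm, fun i => by rw [map_id_toEquiv_val]⟩

lemma linked_unique_val {e e' e'' : El F} {σ} {τ} (hσ : Linked F e e' σ)
    (hτ : Linked F e e'' τ) (h : e' = e'') :
    ∀ i, (σ i).val = (τ i).val := by
  subst h
  have hst := linked_unique F hσ hτ
  subst hst
  exact fun _ => rfl

noncomputable section

/-- A representative of each class. -/
def rp (c : Quot (Rel F)) : El F := Quot.out c

lemma rel_rp (e : El F) : Rel F e (rp F (Quot.mk _ e)) :=
  ((rel_equivalence F).eqvGen_iff).mp (Quot.eq.mp (Quot.out_eq (Quot.mk (Rel F) e)).symm)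

/-- The chosen linking bijection to the representative. -/
def link (e : El F) : Fin ((F.obj e.1).ar e.2) ≃
    Fin ((F.obj (rp F (Quot.mk _ e)).1).ar (rp F (Quot.mk _ e)).2) :=
  (exists_linked F (rel_rp F e)).choose

lemma link_spec (e : El F) : Linked F e (rp F (Quot.mk _ e)) (link F e) :=
  (exists_linked F (rel_rp F e)).choose_spec

/-- The colimit signature. -/
def colim : Sig.{u} O where
  sym := Quot (Rel F)
  ar := fun c => (F.obj (rp F c).1).ar (rp F c).2
  out := fun c => (F.obj (rp F c).1).out (rp F c).2
  inp := fun c => (F.obj (rp F c).1).inp (rp F c).2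

/-- The colimit coprojections. -/
def ι (j : J) : F.obj j ⟶ colim F where
  f := fun x => Quot.mk _ ⟨j, x⟩
  perm := fun x => (link F ⟨j, x⟩).trans (finCongr (linked_ar F (link_spec F ⟨j, x⟩)))
  ar_eq := fun x => linked_ar F (link_spec F ⟨j, x⟩)
  out_eq := fun x => linked_out F (link_spec F ⟨j, x⟩)
  inp_eq := fun x i => by
    show (F.obj (rp F _).1).inp (rp F _).2 (Fin.cast _ _) = _
    rw [show (Fin.cast (linked_ar F (link_spec F ⟨j, x⟩)).symm
        (((link F ⟨j, x⟩).trans (finCongr (linked_ar F (link_spec F ⟨j, x⟩)))) i))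
        = link F ⟨j, x⟩ i from Fin.ext (by simp [finCongr_apply])]
    exact linked_inp F (link_spec F ⟨j, x⟩) i

lemma hom_comp_perm {A B C : Sig.{u} O} (g : A ⟶ B) (h : B ⟶ C) (a : A.sym) :
    (g ≫ h).perm a = (g.perm a).trans ((finCongr (g.ar_eq a).symm).trans
      ((h.perm (g.f a)).trans (finCongr (g.ar_eq a)))) := rfl

lemma comp_toEquiv_val {A B C : Sig.{u} O} (g : A ⟶ B) (h : B ⟶ C) (a : A.sym)
    (i : Fin (A.ar a)) :
    (((g ≫ h).toEquiv a) i).val = ((h.toEquiv (g.f a)) ((g.toEquiv a) i)).val := by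
  rw [show (g ≫ h).toEquiv a = (g.comp h).toEquiv a from rfl, SigHomOver.toEquiv_comp]
  rfl

/-- The colimit cocone. -/
def cocone : Cocone F where
  pt := colim F
  ι :=
    { app := fun j => ι F j
      naturality := fun j j' φ0 => by
        simp only [Functor.const_obj_map, Category.comp_id]
        apply SigHomOver.ext'
        · funext x
          exact Quot.sound (rel_symm F ⟨j', φ0, 𝟙 j', (map_id_f F _).symm⟩)
        · funext x
          ext i
          have hcl := linked_unique_val F
            (linked_trans F (linked_map F φ0 x) (link_spec F ⟨j', (F.map φ0).f x⟩))
            (link_spec F ⟨j, x⟩)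
            (congrArg (rp F) (Quot.sound (rel_symm F ⟨j', φ0, 𝟙 j', (map_id_f F _).symm⟩))) i
          simpa [hom_comp_perm, ι, SigHomOver.toEquiv, finCongr_apply] using hcl }

/-- Descending out of the colimit. -/
def desc (t : Cocone F) : colim F ⟶ t.pt where
  f := fun c => (t.ι.app (rp F c).1).f (rp F c).2
  perm := fun c => (t.ι.app (rp F c).1).perm (rp F c).2
  ar_eq := fun c => (t.ι.app (rp F c).1).ar_eq (rp F c).2
  out_eq := fun c => (t.ι.app (rp F c).1).out_eq (rp F c).2
  inp_eq := fun c i => (t.ι.app (rp F c).1).inp_eq (rp F c).2 i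

lemma cocone_f_eq (t : Cocone F) {e e' : El F} (h : Rel F e e') :
    (t.ι.app e.1).f e.2 = (t.ι.app e'.1).f e'.2 := by
  obtain ⟨l, φ, ψ, hf⟩ := h
  have c1 := congrFun (congrArg SigHomOver.f (t.w φ)) e.2
  have c2 := congrFun (congrArg SigHomOver.f (t.w ψ)) e'.2
  rw [← c1, ← c2]
  exact congrArg (t.ι.app l).f hf

lemma cocone_toEquiv_val (t : Cocone F) {e e' : El F} {σ} (h : Linked F e e' σ)
    (i : Fin ((F.obj e.1).ar e.2)) :
    (((t.ι.app e'.1).toEquiv e'.2) (σ i)).val = (((t.ι.app e.1).toEquiv e.2) i).val := by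
  obtain ⟨l, φ, ψ, hf, hrel⟩ := h
  rw [hom_toEquiv_val_congr (t.w φ).symm e.2 i, hom_toEquiv_val_congr (t.w ψ).symm e'.2 (σ i),
    comp_toEquiv_val, comp_toEquiv_val]
  exact toEquiv_point_val (t.ι.app l) hf.symm (hrel i)

/-- The colimit cocone is a colimit. -/
def isColimit : IsColimit (cocone F) where
  desc := fun t => desc F t
  fac := fun t j => by
    apply SigHomOver.ext'
    · funext x
      exact (cocone_f_eq F t (rel_rp F ⟨j, x⟩)).symm
    · funext x
      ext i
      have hp := cocone_toEquiv_val F t (link_spec F ⟨j, x⟩) i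
      have hw : ((Fin.cast ((ι F j).ar_eq x).symm ((ι F j).perm x i))).val
          = ((link F ⟨j, x⟩) i).val := rfl
      simp only [toEquiv_val] at hp
      exact (perm_congr (t.ι.app (rp F (Quot.mk _ ⟨j, x⟩)).1) rfl hw).trans hp
  uniq := fun t m hm => by
    apply SigHomOver.ext'
    · funext c
      have hc : Quot.mk (Rel F) (rp F c) = c := Quot.out_eq c
      have h := congrFun (congrArg SigHomOver.f (hm (rp F c).1)) (rp F c).2
      conv_lhs => rw [← hc]
      exact h
    · funext c
      ext i
      have hc : Quot.mk (Rel F) (rp F c) = c := Quot.out_eq c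
      have hlink := linked_unique_val F (link_spec F (rp F c)) (linked_refl F (rp F c))
        (congrArg (rp F) hc) i
      have hw : ((Fin.cast ((ι F (rp F c).1).ar_eq (rp F c).2).symm
          ((ι F (rp F c).1).perm (rp F c).2 i))).val = i.val := by
        exact hlink
      have hv := congrArg (fun (σ : Equiv.Perm _) => (σ i).val)
        (congrFun (congrArg SigHomOver.perm (hm (rp F c).1)) (rp F c).2)
      simp only [hom_comp_perm, Equiv.trans_apply, finCongr_apply, Fin.coe_cast] at hv
      exact (perm_congr m hc.symm hw.symm).trans hv

end

instance (O : Type u) : HasFilteredColimitsOfSize.{u, u} (Sig.{u} O) :=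
  ⟨fun _ _ _ => ⟨fun F => HasColimit.mk ⟨cocone F, isColimit F⟩⟩⟩

end SigFil

open CategoryTheory.Limits

theorem sig_cocompleteness :
    HasPullbacks (SigTot.{u}) ∧
      HasCoproducts.{u} (SigTot.{u}) ∧
      ∀ O : Type u, HasFilteredColimitsOfSize.{u, u} (Sig.{u} O) := by
  exact ⟨inferInstance, inferInstance, fun O => inferInstance⟩
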